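/- Let m,p>0 with 0<mp<1, β∈(0,mp), b>0, and let C_* = [b(mp−β)^{1+p}/((m(1+p))^p p(m+β))]^{1/(mp−β)}. For constants C₀,ζ₀>0 define f₁(ζ) = C₀(ζ₀−ζ)_+^{(1+p)/(mp−β)} and the operator 𝓛₀f₁ = ((β−mp)/((1+p)(1−β)))·ζ f₁' + f₁/(1−β) − (|(f₁^m)'|^{p−1}(f₁^m)')' + b f₁^β. Then for 0<ζ<ζ₀, 𝓛₀f₁(ζ) = b C₀^β (ζ₀−ζ)^{(1+p)β/(mp−β)} · [ 1 − (C₀/C_*)^{mp−β} + (C₀^{1−β}/(b(1−β)))·ζ₀·(ζ₀−ζ)^{(1+p(1−m−β))/(mp−β)} ]. -/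

import Mathlib

open Real Filter

set_option maxHeartbeats 1000000

theorem barrier_operator_computation
    (m p b β : ℝ) (hm : 0 < m) (hp : 0 < p) (hmp0 : 0 < m * p) (hmp : m * p < 1)
    (hβ0 : 0 < β) (hβ : β < m * p) (hb : 0 < b)
    (Cstar : ℝ)
    (hCstar : Cstar = (b * (m * p - β) ^ (1 + p) /
      ((m * (1 + p)) ^ p * p * (m + β))) ^ (1 / (m * p - β)))
    (C₀ ζ₀ : ℝ) (hC₀ : 0 < C₀) (hζ₀ : 0 < ζ₀)
    (f₁ : ℝ → ℝ)
    (hf₁ : ∀ ζ, f₁ ζ = C₀ * (max (ζ₀ - ζ) 0) ^ ((1 + p) / (m * p - β))) :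
    ∀ ζ : ℝ, 0 < ζ → ζ < ζ₀ →
      ((β - m * p) / ((1 + p) * (1 - β))) * ζ * deriv f₁ ζ + f₁ ζ / (1 - β)
        - deriv (fun y => |deriv (fun z => (f₁ z) ^ m) y| ^ (p - 1) *
            deriv (fun z => (f₁ z) ^ m) y) ζ
        + b * (f₁ ζ) ^ β
      = b * C₀ ^ β * (ζ₀ - ζ) ^ ((1 + p) * β / (m * p - β)) *
          (1 - (C₀ / Cstar) ^ (m * p - β) +
            (C₀ ^ (1 - β) / (b * (1 - β))) * ζ₀ *
              (ζ₀ - ζ) ^ ((1 + p * (1 - m - β)) / (m * p - β))) := by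
  intro ζ hζ0 hζ
  have hβ1 : β < 1 := hβ.trans hmp
  have h1β : 0 < 1 - β := by linarith
  have hq : 0 < m * p - β := by linarith
  set q : ℝ := m * p - β with hqdef
  set α : ℝ := (1 + p) / q with hαdef
  have h1p : (0:ℝ) < 1 + p := by linarith
  have hαpos : 0 < α := div_pos h1p hq
  have hqne : q ≠ 0 := ne_of_gt hq
  have hmα : 0 < m * α := mul_pos hm hαpos
  have hK1 : 0 < C₀ ^ m * (m * α) := mul_pos (rpow_pos_of_pos hC₀ m) hmα
  have hXpos : 0 < ζ₀ - ζ := by linarith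
  -- f₁ eventually equals explicit power near any x < ζ₀
  have hfe : ∀ x : ℝ, x < ζ₀ → f₁ =ᶠ[nhds x] fun z => C₀ * (ζ₀ - z) ^ α := by
    intro x hx
    filter_upwards [Iio_mem_nhds hx] with z hz
    have hz' : z < ζ₀ := hz
    rw [hf₁ z, max_eq_left (by linarith : (0:ℝ) ≤ ζ₀ - z)]
  have hbase : ∀ x : ℝ, HasDerivAt (fun z => ζ₀ - z) (-1) x := by
    intro x
    simpa using (hasDerivAt_id x).const_sub ζ₀
  have hg : ∀ x : ℝ, x < ζ₀ → HasDerivAt f₁ (-(C₀ * α) * (ζ₀ - x) ^ (α - 1)) x := by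
    intro x hx
    have hxp : 0 < ζ₀ - x := by linarith
    have h := ((hbase x).rpow_const (p := α) (Or.inl (ne_of_gt hxp))).const_mul C₀
    have h2 : HasDerivAt (fun z => C₀ * (ζ₀ - z) ^ α) (-(C₀ * α) * (ζ₀ - x) ^ (α - 1)) x := by
      exact h.congr_deriv (by ring)
    exact h2.congr_of_eventuallyEq (hfe x hx)
  -- f₁ ^ m
  have hfme : ∀ x : ℝ, x < ζ₀ → (fun z => (f₁ z) ^ m) =ᶠ[nhds x]
      fun z => C₀ ^ m * (ζ₀ - z) ^ (m * α) := by
    intro x hx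
    filter_upwards [Iio_mem_nhds hx] with z hz
    have hz' : z < ζ₀ := hz
    have hzp : (0:ℝ) < ζ₀ - z := by linarith
    rw [hf₁ z, max_eq_left hzp.le, mul_rpow hC₀.le (rpow_nonneg hzp.le α),
      ← rpow_mul hzp.le, mul_comm α m]
  have hfm : ∀ x : ℝ, x < ζ₀ → HasDerivAt (fun z => (f₁ z) ^ m)
      (-(C₀ ^ m * (m * α)) * (ζ₀ - x) ^ (m * α - 1)) x := by
    intro x hx
    have hxp : 0 < ζ₀ - x := by linarith
    have h := ((hbase x).rpow_const (p := m * α) (Or.inl (ne_of_gt hxp))).const_mul (C₀ ^ m)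
    have h2 : HasDerivAt (fun z => C₀ ^ m * (ζ₀ - z) ^ (m * α))
        (-(C₀ ^ m * (m * α)) * (ζ₀ - x) ^ (m * α - 1)) x := by
      exact h.congr_deriv (by ring)
    exact h2.congr_of_eventuallyEq (hfme x hx)
  have hderfm : ∀ x : ℝ, x < ζ₀ → deriv (fun z => (f₁ z) ^ m) x =
      -(C₀ ^ m * (m * α)) * (ζ₀ - x) ^ (m * α - 1) := fun x hx => (hfm x hx).deriv
  -- the flux term
  have hFe : (fun y => |deriv (fun z => (f₁ z) ^ m) y| ^ (p - 1) *
      deriv (fun z => (f₁ z) ^ m) y) =ᶠ[nhds ζ]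
      fun y => -((C₀ ^ m * (m * α)) ^ p) * (ζ₀ - y) ^ ((m * α - 1) * p) := by
    filter_upwards [Iio_mem_nhds hζ] with y hy
    have hy' : y < ζ₀ := hy
    have hyp : (0:ℝ) < ζ₀ - y := by linarith
    have hT : 0 < (ζ₀ - y) ^ (m * α - 1) := rpow_pos_of_pos hyp _
    rw [hderfm y hy']
    have habs : |-(C₀ ^ m * (m * α)) * (ζ₀ - y) ^ (m * α - 1)|
        = C₀ ^ m * (m * α) * (ζ₀ - y) ^ (m * α - 1) := by
      rw [abs_of_neg (by nlinarith)]; ring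
    rw [habs]
    have key : (C₀ ^ m * (m * α) * (ζ₀ - y) ^ (m * α - 1)) ^ (p - 1) *
        (-(C₀ ^ m * (m * α)) * (ζ₀ - y) ^ (m * α - 1))
        = -((C₀ ^ m * (m * α) * (ζ₀ - y) ^ (m * α - 1)) ^ (p - 1 + 1)) := by
      rw [rpow_add_one (ne_of_gt (mul_pos hK1 hT))]
      ring
    rw [key, show p - 1 + 1 = p by ring, mul_rpow hK1.le hT.le, ← rpow_mul hyp.le]
    ring
  have hG : HasDerivAt (fun y => -((C₀ ^ m * (m * α)) ^ p) * (ζ₀ - y) ^ ((m * α - 1) * p))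
      ((C₀ ^ m * (m * α)) ^ p * ((m * α - 1) * p) * (ζ₀ - ζ) ^ ((m * α - 1) * p - 1)) ζ := by
    have h := ((hbase ζ).rpow_const (p := (m * α - 1) * p) (Or.inl (ne_of_gt hXpos))).const_mul
      (-((C₀ ^ m * (m * α)) ^ p))
    exact h.congr_deriv (by ring)
  have hderF : deriv (fun y => |deriv (fun z => (f₁ z) ^ m) y| ^ (p - 1) *
      deriv (fun z => (f₁ z) ^ m) y) ζ
      = (C₀ ^ m * (m * α)) ^ p * ((m * α - 1) * p) * (ζ₀ - ζ) ^ ((m * α - 1) * p - 1) :=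
    (hG.congr_of_eventuallyEq hFe).deriv
  rw [hderF, (hg ζ hζ).deriv, hf₁ ζ, max_eq_left hXpos.le]
  -- now pure rpow algebra
  set X : ℝ := ζ₀ - ζ with hXdef
  set P : ℝ := X ^ (α - 1) with hPdef
  set Q : ℝ := X ^ (β * α) with hQdef
  have hE1 : X ^ ((m * α - 1) * p - 1) = Q := by
    rw [hQdef]; congr 1; rw [hαdef]; field_simp; ring
  have hE2 : X ^ ((1 + p) * β / q) = Q := by
    rw [hQdef]; congr 1; rw [hαdef]; field_simp
  have hXα : X ^ ((1 + p) / q) = P * X := by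
    rw [hPdef, ← rpow_add_one (ne_of_gt hXpos)]
    congr 1; rw [hαdef]; ring
  have hfβ : (C₀ * X ^ ((1 + p) / q)) ^ β = C₀ ^ β * Q := by
    rw [mul_rpow hC₀.le (rpow_nonneg hXpos.le _), ← rpow_mul hXpos.le, hQdef]
    congr 2
    rw [hαdef]; ring
  have hQX4 : Q * X ^ ((1 + p * (1 - m - β)) / q) = P := by
    rw [hQdef, hPdef, ← rpow_add hXpos]
    congr 1; rw [hαdef]; field_simp; ring
  have hC : C₀ ^ β * C₀ ^ (1 - β) = C₀ := by
    rw [← rpow_add hC₀]; norm_num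
  -- Cstar ^ q
  have hmppos : 0 < m * (1 + p) := mul_pos hm h1p
  have hZpos : 0 < b * q ^ (1 + p) / ((m * (1 + p)) ^ p * p * (m + β)) := by
    apply div_pos (mul_pos hb (rpow_pos_of_pos hq _))
    exact mul_pos (mul_pos (rpow_pos_of_pos hmppos p) hp) (by linarith)
  have hCsq : Cstar ^ q = b * q ^ (1 + p) / ((m * (1 + p)) ^ p * p * (m + β)) := by
    rw [hCstar, ← rpow_mul hZpos.le, one_div, inv_mul_cancel₀ hqne, rpow_one]
  have hCsnn : 0 ≤ Cstar := by rw [hCstar]; exact rpow_nonneg hZpos.le _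
  have hi : b * C₀ ^ β * (C₀ / Cstar) ^ q = (C₀ ^ m * (m * α)) ^ p * ((m * α - 1) * p) := by
    rw [div_rpow hC₀.le hCsnn, hCsq]
    have hCq : C₀ ^ β * C₀ ^ q = C₀ ^ (m * p) := by
      rw [← rpow_add hC₀]; congr 1; rw [hqdef]; ring
    have hKp : (C₀ ^ m * (m * α)) ^ p = C₀ ^ (m * p) * ((m * (1 + p)) ^ p / q ^ p) := by
      rw [mul_rpow (rpow_nonneg hC₀.le m) hmα.le, ← rpow_mul hC₀.le, hαdef,
        show m * ((1 + p) / q) = m * (1 + p) / q by ring, div_rpow hmppos.le hq.le]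
    have hq1p : q ^ (1 + p) = q * q ^ p := by
      rw [rpow_add hq, rpow_one]
    rw [hKp, hq1p]
    have hqp : (0:ℝ) < q ^ p := rpow_pos_of_pos hq _
    have hmp_pow : (0:ℝ) < (m * (1 + p)) ^ p := rpow_pos_of_pos hmppos _
    have hmαq : m * α - 1 = (m + β) / q := by
      rw [hαdef, hqdef]; field_simp [hqdef ▸ hqne]; ring
    rw [hmαq, ← hCq]
    field_simp
  -- final assembly
  rw [hE1, hE2, hfβ, hXα]
  have hLHS : (β - m * p) / ((1 + p) * (1 - β)) * ζ * (-(C₀ * α) * P)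
      + C₀ * (P * X) / (1 - β)
      - (C₀ ^ m * (m * α)) ^ p * ((m * α - 1) * p) * Q
      + b * (C₀ ^ β * Q)
      = C₀ * ζ₀ / (1 - β) * P + (b * C₀ ^ β - (C₀ ^ m * (m * α)) ^ p * ((m * α - 1) * p)) * Q := by
    rw [hαdef, hqdef, hXdef]
    field_simp [hqdef ▸ hqne]
    ring
  rw [hLHS]
  have hRHS : b * C₀ ^ β * Q * (1 - (C₀ / Cstar) ^ q +
      C₀ ^ (1 - β) / (b * (1 - β)) * ζ₀ * X ^ ((1 + p * (1 - m - β)) / q))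
      = C₀ * ζ₀ / (1 - β) * P
        + (b * C₀ ^ β - (C₀ ^ m * (m * α)) ^ p * ((m * α - 1) * p)) * Q := by
    have hS : b * C₀ ^ β * Q * (C₀ ^ (1 - β) / (b * (1 - β)) * ζ₀ *
        X ^ ((1 + p * (1 - m - β)) / q)) = C₀ * ζ₀ / (1 - β) * P := by
      have h1 : b * C₀ ^ β * Q * (C₀ ^ (1 - β) / (b * (1 - β)) * ζ₀ *
          X ^ ((1 + p * (1 - m - β)) / q))
          = C₀ ^ β * C₀ ^ (1 - β) * ζ₀ / (1 - β) * (Q * X ^ ((1 + p * (1 - m - β)) / q)) := by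
        field_simp
      rw [h1, hC, hQX4]
    calc b * C₀ ^ β * Q * (1 - (C₀ / Cstar) ^ q +
        C₀ ^ (1 - β) / (b * (1 - β)) * ζ₀ * X ^ ((1 + p * (1 - m - β)) / q))
        = b * C₀ ^ β * Q - (b * C₀ ^ β * (C₀ / Cstar) ^ q) * Q
          + b * C₀ ^ β * Q * (C₀ ^ (1 - β) / (b * (1 - β)) * ζ₀ *
            X ^ ((1 + p * (1 - m - β)) / q)) := by ring
      _ = _ := by rw [hi, hS]; ring
  rw [hRHS]
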